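/- arXiv:1506.03265 — 2 statements merged into one kernel-verified Lean document; each statement's English description precedes it below -/
import Mathlib

section
/- Let G be a finite connected undirected weighted graph, C a clustering of G with radius R (every node u is within weighted distance d_u ≤ R of its cluster center c_u), and let G_C be the quotient graph whose nodes are the clusters and which has, for each edge (u,v) of G with c_u ≠ c_v, an edge between the clusters of u and v of weight w(u,v) + d_u + d_v. Then the weighted diameter of G satisfies Φ(G) ≤ Φ(G_C) + 2R. -/
/-- `l` is a walk from `u` to `v` in the graph with edge relation `E`. -/
def WalkFrom {V : Type*} (E : V → V → Prop) (u v : V) (l : List V) : Prop :=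
  l ≠ [] ∧ l.Chain' E ∧ l.head? = some u ∧ l.getLast? = some v

/-- total weight of a walk given by the list of its vertices -/
def wgt {V : Type*} (w : V → V → ℝ) (l : List V) : ℝ :=
  ((l.zip l.tail).map fun p => w p.1 p.2).sum

/-- weighted shortest-path distance -/
noncomputable def gdist {V : Type*} (E : V → V → Prop) (w : V → V → ℝ) (u v : V) : ℝ :=
  sInf {x | ∃ l, WalkFrom E u v l ∧ wgt w l = x}

/-- edge relation of the quotient graph: clusters `i ≠ j` are adjacent iff some
edge of `G` crosses between them -/
def EC {V : Type*} {τ : ℕ} (E : V → V → Prop) (cl : V → Fin τ) :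
    Fin τ → Fin τ → Prop :=
  fun i j => i ≠ j ∧ ∃ u v, E u v ∧ cl u = i ∧ cl v = j

/-- weight of a quotient edge: the minimum over crossing edges `(u,v)` of
`w(u,v) + d_u + d_v`, where `d_u = dist(u, center of u's cluster)` -/
noncomputable def wC {V : Type*} {τ : ℕ} (E : V → V → Prop) (w : V → V → ℝ)
    (cl : V → Fin τ) (ctr : Fin τ → V) : Fin τ → Fin τ → ℝ :=
  fun i j => sInf {x | ∃ u v, E u v ∧ cl u = i ∧ cl v = j ∧
    x = w u v + gdist E w u (ctr i) + gdist E w v (ctr j)}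

/-- weighted diameter -/
noncomputable def diam {V : Type*} (E : V → V → Prop) (w : V → V → ℝ) : ℝ :=
  ⨆ u, ⨆ v, gdist E w u v


section aux
variable {V : Type*} {E : V → V → Prop} {w : V → V → ℝ}

@[simp] lemma wgt_nil : wgt w ([] : List V) = 0 := by simp [wgt]
@[simp] lemma wgt_single (a : V) : wgt w [a] = 0 := by simp [wgt]
@[simp] lemma wgt_cons (a b : V) (t : List V) :
    wgt w (a :: b :: t) = w a b + wgt w (b :: t) := by simp [wgt]

lemma wgt_append_cons (w : V → V → ℝ) : ∀ (l : List V) (x : V) (t : List V),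
    wgt w (l ++ x :: t) = wgt w (l ++ [x]) + wgt w (x :: t)
  | [], x, t => by simp
  | [a], x, t => by simp
  | a :: b :: l, x, t => by
    have ih := wgt_append_cons w (b :: l) x t
    simp only [List.cons_append, wgt_cons] at *
    rw [ih]; ring

lemma wgt_nonneg (hpos : ∀ u v, E u v → 0 < w u v) :
    ∀ {l : List V}, l.Chain' E → 0 ≤ wgt w l
  | [], _ => by simp
  | [a], _ => by simp
  | a :: b :: t, h => by
    rw [List.Chain', List.isChain_cons_cons] at h
    have := wgt_nonneg hpos h.2
    have := hpos a b h.1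
    simp only [wgt_cons]; linarith

lemma gdist_bddBelow (hpos : ∀ u v, E u v → 0 < w u v) (u v : V) :
    BddBelow {x | ∃ l, WalkFrom E u v l ∧ wgt w l = x} :=
  ⟨0, fun _ ⟨_, hl, he⟩ => he ▸ wgt_nonneg hpos hl.2.1⟩

lemma gdist_le_wgt (hpos : ∀ u v, E u v → 0 < w u v) {u v : V} {l : List V}
    (h : WalkFrom E u v l) : gdist E w u v ≤ wgt w l :=
  csInf_le (gdist_bddBelow hpos u v) ⟨l, h, rfl⟩

lemma gdist_nonneg (hpos : ∀ u v, E u v → 0 < w u v) (u v : V) :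
    0 ≤ gdist E w u v :=
  Real.sInf_nonneg fun _ ⟨_, hl, he⟩ => he ▸ wgt_nonneg hpos hl.2.1

lemma walkFrom_self (u : V) : WalkFrom E u u [u] := ⟨by simp, by simp [List.Chain'], rfl, rfl⟩

lemma gdist_self_nonpos (hpos : ∀ u v, E u v → 0 < w u v) (u : V) :
    gdist E w u u ≤ 0 := by
  simpa using gdist_le_wgt hpos (walkFrom_self u)

lemma walkFrom_append {u x v : V} {l1 l2 : List V}
    (h1 : WalkFrom E u x l1) (h2 : WalkFrom E x v l2) :
    ∃ l, WalkFrom E u v l ∧ wgt w l = wgt w l1 + wgt w l2 := by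
  obtain ⟨hne1, hc1, hh1, hl1⟩ := h1
  obtain ⟨hne2, hc2, hh2, hl2⟩ := h2
  obtain ⟨l1', rfl⟩ := List.getLast?_eq_some_iff.mp hl1
  obtain ⟨t, rfl⟩ : ∃ t, l2 = x :: t := by
    cases l2 with
    | nil => exact absurd rfl hne2
    | cons a t =>
        obtain rfl : a = x := by simpa using hh2
        exact ⟨t, rfl⟩
  refine ⟨l1' ++ x :: t, ⟨by simp, ?_, ?_, ?_⟩, by rw [wgt_append_cons]⟩
  · have h := List.isChain_append.mp hc1
    refine List.isChain_append.mpr ⟨h.1, hc2, ?_⟩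
    intro a ha y hy
    simp only [List.head?_cons, Option.mem_def, Option.some.injEq] at hy
    exact hy ▸ h.2.2 a ha x (by simp)
  · cases l1' with
    | nil => simpa using hh1
    | cons a s => simpa using hh1
  · rw [List.getLast?_append, show (x :: t).getLast? = some v from by simpa using hl2]; rfl
end aux

section aux2
variable {V : Type*} {E : V → V → Prop} {w : V → V → ℝ}

lemma gdist_set_nonempty (hconn : ∀ u v : V, ∃ l, WalkFrom E u v l) (u v : V) :
    Set.Nonempty {x | ∃ l, WalkFrom E u v l ∧ wgt w l = x} := by
  obtain ⟨l, hl⟩ := hconn u v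
  exact ⟨wgt w l, l, hl, rfl⟩

lemma gdist_triangle (hpos : ∀ u v, E u v → 0 < w u v)
    (hconn : ∀ u v : V, ∃ l, WalkFrom E u v l) (u x v : V) :
    gdist E w u v ≤ gdist E w u x + gdist E w x v := by
  have key : ∀ a ∈ {y | ∃ l, WalkFrom E u x l ∧ wgt w l = y},
      ∀ b ∈ {y | ∃ l, WalkFrom E x v l ∧ wgt w l = y}, gdist E w u v ≤ a + b := by
    rintro a ⟨l1, hl1, rfl⟩ b ⟨l2, hl2, rfl⟩
    obtain ⟨l, hl, hw⟩ := walkFrom_append (w := w) hl1 hl2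
    exact hw ▸ gdist_le_wgt hpos hl
  have h2 : gdist E w u v - gdist E w u x ≤ gdist E w x v := by
    refine le_csInf (gdist_set_nonempty hconn x v) fun b hb => ?_
    have h3 : gdist E w u v - b ≤ gdist E w u x :=
      le_csInf (gdist_set_nonempty hconn u x) fun a ha => by linarith [key a ha b hb]
    linarith
  linarith

lemma wgt_reverse (hwsym : ∀ u v : V, w u v = w v u) :
    ∀ l : List V, wgt w l.reverse = wgt w l
  | [] => by simp
  | [a] => by simp
  | a :: b :: t => by
    have ih := wgt_reverse hwsym (b :: t)
    rw [show (a :: b :: t).reverse = t.reverse ++ b :: [a] by simp,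
      wgt_append_cons, show t.reverse ++ [b] = (b :: t).reverse by simp, ih,
      wgt_cons, wgt_single, wgt_cons, hwsym b a]
    ring

lemma walkFrom_reverse (hsym : ∀ u v, E u v → E v u) {u v : V} {l : List V}
    (h : WalkFrom E u v l) : WalkFrom E v u l.reverse := by
  obtain ⟨hne, hc, hh, hl⟩ := h
  exact ⟨by simpa using hne, List.isChain_reverse.mpr (List.IsChain.imp (fun a b hab => hsym a b hab) hc),
    by rw [List.head?_reverse, hl], by rw [List.getLast?_reverse, hh]⟩

lemma gdist_symm (hsym : ∀ u v, E u v → E v u) (hwsym : ∀ u v : V, w u v = w v u)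
    (hpos : ∀ u v, E u v → 0 < w u v)
    (hconn : ∀ u v : V, ∃ l, WalkFrom E u v l) (u v : V) :
    gdist E w u v = gdist E w v u := by
  have key : ∀ a b : V, gdist E w a b ≤ gdist E w b a := by
    intro a b
    refine le_csInf (gdist_set_nonempty hconn b a) ?_
    rintro x ⟨l, hl, rfl⟩
    calc gdist E w a b ≤ wgt w l.reverse := gdist_le_wgt hpos (walkFrom_reverse hsym hl)
    _ = wgt w l := wgt_reverse hwsym l
  exact le_antisymm (key u v) (key v u)

end aux2

section aux3
variable {V : Type*} {E : V → V → Prop} {w : V → V → ℝ} {τ : ℕ}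

lemma quot_walk (cl : V → Fin τ) :
    ∀ l : List V, l.Chain' E → ∀ a b, l.head? = some a → l.getLast? = some b →
      ∃ m, WalkFrom (EC E cl) (cl a) (cl b) m
  | [], _, a, _, ha, _ => by simp at ha
  | [x], _, a, b, ha, hb => by
    obtain rfl : x = a := by simpa using ha
    obtain rfl : x = b := by simpa using hb
    exact ⟨[cl x], walkFrom_self _⟩
  | x :: y :: t, hc, a, b, ha, hb => by
    obtain rfl : x = a := by simpa using ha
    rw [List.Chain', List.isChain_cons_cons] at hc
    rw [List.getLast?_cons_cons] at hb
    obtain ⟨m, hm⟩ := quot_walk cl (y :: t) hc.2 y b rfl hb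
    by_cases h : cl x = cl y
    · exact ⟨m, h ▸ hm⟩
    · obtain ⟨hne, hcm, hhm, hlm⟩ := hm
      obtain ⟨j, m', rfl⟩ : ∃ j m', m = j :: m' := by
        cases m with
        | nil => exact absurd rfl hne
        | cons j m' => exact ⟨j, m', rfl⟩
      obtain rfl : j = cl y := by simpa using hhm
      refine ⟨cl x :: cl y :: m', ⟨by simp, ?_, rfl, by
        rw [List.getLast?_cons_cons]; exact hlm⟩⟩
      exact List.isChain_cons_cons.mpr ⟨⟨h, x, y, hc.1, rfl, rfl⟩, hcm⟩

lemma walkFrom_pair {u v : V} (he : E u v) : WalkFrom E u v [u, v] :=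
  ⟨by simp, by simp [List.Chain', List.isChain_cons_cons, he], rfl, by simp⟩

lemma center_edge_bound (cl : V → Fin τ) (ctr : Fin τ → V)
    (hsym : ∀ u v, E u v → E v u) (hwsym : ∀ u v : V, w u v = w v u)
    (hpos : ∀ u v, E u v → 0 < w u v)
    (hconn : ∀ u v : V, ∃ l, WalkFrom E u v l) {i j : Fin τ}
    (hij : EC E cl i j) :
    gdist E w (ctr i) (ctr j) ≤ wC E w cl ctr i j := by
  obtain ⟨hne, u0, v0, he0, hu0, hv0⟩ := hij
  refine le_csInf ⟨_, u0, v0, he0, hu0, hv0, rfl⟩ ?_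
  rintro x ⟨u, v, he, hu, hv, rfl⟩
  have h1 : gdist E w (ctr i) (ctr j) ≤ gdist E w (ctr i) u + gdist E w u (ctr j) :=
    gdist_triangle hpos hconn _ _ _
  have h1' : gdist E w u (ctr j) ≤ gdist E w u v + gdist E w v (ctr j) :=
    gdist_triangle hpos hconn _ _ _
  have h2 : gdist E w u v ≤ w u v := by
    simpa using gdist_le_wgt hpos (walkFrom_pair he)
  have h3 : gdist E w (ctr i) u = gdist E w u (ctr i) :=
    gdist_symm hsym hwsym hpos hconn _ _
  linarith

lemma quot_walk_bound (cl : V → Fin τ) (ctr : Fin τ → V)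
    (hsym : ∀ u v, E u v → E v u) (hwsym : ∀ u v : V, w u v = w v u)
    (hpos : ∀ u v, E u v → 0 < w u v)
    (hconn : ∀ u v : V, ∃ l, WalkFrom E u v l) :
    ∀ m : List (Fin τ), m.Chain' (EC E cl) → ∀ i j : Fin τ,
      m.head? = some i → m.getLast? = some j →
      gdist E w (ctr i) (ctr j) ≤ wgt (wC E w cl ctr) m
  | [], _, i, _, hi, _ => by simp at hi
  | [x], _, i, j, hi, hj => by
    obtain rfl : x = i := by simpa using hi
    obtain rfl : x = j := by simpa using hj
    simpa using gdist_self_nonpos hpos (ctr x)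
  | x :: y :: t, hc, i, j, hi, hj => by
    obtain rfl : x = i := by simpa using hi
    rw [List.Chain', List.isChain_cons_cons] at hc
    rw [List.getLast?_cons_cons] at hj
    have ih := quot_walk_bound cl ctr hsym hwsym hpos hconn (y :: t) hc.2 y j rfl hj
    have h1 : gdist E w (ctr x) (ctr j) ≤
        gdist E w (ctr x) (ctr y) + gdist E w (ctr y) (ctr j) :=
      gdist_triangle hpos hconn _ _ _
    have h2 := center_edge_bound cl ctr hsym hwsym hpos hconn hc.1
    rw [wgt_cons]
    linarith

lemma gdist_center_le_quot (cl : V → Fin τ) (ctr : Fin τ → V)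
    (hsym : ∀ u v, E u v → E v u) (hwsym : ∀ u v : V, w u v = w v u)
    (hpos : ∀ u v, E u v → 0 < w u v)
    (hconn : ∀ u v : V, ∃ l, WalkFrom E u v l)
    (hctr : ∀ i, cl (ctr i) = i) (i j : Fin τ) :
    gdist E w (ctr i) (ctr j) ≤ gdist (EC E cl) (wC E w cl ctr) i j := by
  obtain ⟨l, hne, hcl, hh, hl⟩ := hconn (ctr i) (ctr j)
  obtain ⟨m, hm⟩ := quot_walk cl l hcl _ _ hh hl
  rw [hctr, hctr] at hm
  refine le_csInf ⟨wgt (wC E w cl ctr) m, m, hm, rfl⟩ ?_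
  rintro x ⟨m', hm', rfl⟩
  exact quot_walk_bound cl ctr hsym hwsym hpos hconn m' hm'.2.1 i j hm'.2.2.1 hm'.2.2.2

end aux3

theorem stmt5 {V : Type*} [Fintype V] [Nonempty V]
    (E : V → V → Prop) (w : V → V → ℝ)
    (hsym : ∀ u v, E u v → E v u) (hwsym : ∀ u v, w u v = w v u)
    (hpos : ∀ u v, E u v → 0 < w u v)
    (hconn : ∀ u v : V, ∃ l, WalkFrom E u v l)
    (τ : ℕ) (cl : V → Fin τ) (ctr : Fin τ → V)
    (hctr : ∀ i, cl (ctr i) = i)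
    (R : ℝ) (hR : ∀ u, gdist E w u (ctr (cl u)) ≤ R) :
    diam E w ≤ diam (EC E cl) (wC E w cl ctr) + 2 * R := by
  have hτ : Nonempty (Fin τ) := ⟨cl (Classical.arbitrary V)⟩
  refine ciSup_le fun u => ciSup_le fun v => ?_
  set i := cl u; set j := cl v
  have t1 : gdist E w u v ≤ gdist E w u (ctr i) + gdist E w (ctr i) v :=
    gdist_triangle hpos hconn _ _ _
  have t2 : gdist E w (ctr i) v ≤ gdist E w (ctr i) (ctr j) + gdist E w (ctr j) v :=
    gdist_triangle hpos hconn _ _ _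
  have t3 : gdist E w (ctr j) v = gdist E w v (ctr j) :=
    gdist_symm hsym hwsym hpos hconn _ _
  have t4 : gdist E w (ctr i) (ctr j) ≤ gdist (EC E cl) (wC E w cl ctr) i j :=
    gdist_center_le_quot cl ctr hsym hwsym hpos hconn hctr i j
  have t5 : gdist (EC E cl) (wC E w cl ctr) i j ≤ diam (EC E cl) (wC E w cl ctr) := by
    have h1 : gdist (EC E cl) (wC E w cl ctr) i j ≤
        ⨆ j', gdist (EC E cl) (wC E w cl ctr) i j' :=
      le_ciSup (Set.Finite.bddAbove (Set.finite_range _)) j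
    have h2 : (⨆ j', gdist (EC E cl) (wC E w cl ctr) i j') ≤
        diam (EC E cl) (wC E w cl ctr) :=
      le_ciSup (f := fun i' => ⨆ j', gdist (EC E cl) (wC E w cl ctr) i' j')
        (Set.Finite.bddAbove (Set.finite_range _)) i
    linarith
  have hRu := hR u
  have hRv := hR v
  linarith
end

section
/- In the synchronous parallel Bellman–Ford relaxation process from a source set X with the restriction that only edges of weight ≤ Δ are relaxed and updates are only accepted when the new tentative distance is ≤ Δ (a 'Δ-growing step'), the tentative distance d_v of every node v is, at every step, at least the true Δ-light distance from X to v, where the Δ-light distance uses only paths of total weight ≤ Δ consisting of edges of weight ≤ Δ; and after ℓ_Δ steps every node at Δ-light distance ≤ Δ from X attains d_v equal to its Δ-light distance from X. -/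
open scoped ENNReal

/-- total weight of a walk given by the list of its vertices -/
noncomputable def wgtE {V : Type*} (w : V → V → ℝ≥0∞) (l : List V) : ℝ≥0∞ :=
  ((l.zip l.tail).map fun p => w p.1 p.2).sum

/-- distance from the source set `X` with respect to an edge relation -/
noncomputable def distX {V : Type*} (E : V → V → Prop) (w : V → V → ℝ≥0∞)
    (X : Set V) (v : V) : ℝ≥0∞ :=
  ⨅ s ∈ X, ⨅ l : List V, ⨅ (_ : WalkFrom E s v l), wgtE w l

/-- the light edge relation: edges of weight at most `Δ` -/
def lightE {V : Type*} (E : V → V → Prop) (w : V → V → ℝ≥0∞) (Δ : ℝ≥0∞) :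
    V → V → Prop :=
  fun u v => E u v ∧ w u v ≤ Δ

/-- a `Δ`-growing step: relax, in parallel, every light edge `(u,v)` with
`d_u < Δ`, accepting the update only if the new value is at most `Δ` -/
noncomputable def growStep {V : Type*} (E : V → V → Prop) (w : V → V → ℝ≥0∞)
    (Δ : ℝ≥0∞) (d : V → ℝ≥0∞) : V → ℝ≥0∞ :=
  fun v => d v ⊓
    ⨅ u, ⨅ (_ : E u v ∧ w u v ≤ Δ ∧ d u < Δ ∧ d u + w u v ≤ Δ), d u + w u v

/-- initial tentative distances: `0` on the sources, `∞` elsewhere -/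
noncomputable def dInit {V : Type*} (X : Set V) : V → ℝ≥0∞ :=
  fun v => ⨅ (_ : v ∈ X), 0


section Aux
variable {V : Type*} (E : V → V → Prop) (w : V → V → ℝ≥0∞)

lemma wgtE_singleton (a : V) : wgtE w [a] = 0 := by simp [wgtE]

lemma wgtE_cons_cons (a b : V) (l : List V) :
    wgtE w (a :: b :: l) = w a b + wgtE w (b :: l) := by
  simp [wgtE]

lemma wgtE_append_last : ∀ (l : List V) (u v : V), l.getLast? = some u →
    wgtE w (l ++ [v]) = wgtE w l + w u v
  | [], u, v, h => by simp at h
  | [a], u, v, h => by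
      simp only [List.getLast?_singleton, Option.some_inj] at h
      subst h
      simp [wgtE]
  | a :: b :: l, u, v, h => by
      have h' : (b :: l).getLast? = some u := by
        rwa [List.getLast?_cons_cons] at h
      have ih := wgtE_append_last (b :: l) u v h'
      simp only [List.cons_append] at *
      rw [wgtE_cons_cons, wgtE_cons_cons, ih, add_assoc]

lemma walkFrom_singleton (v : V) : WalkFrom E v v [v] :=
  ⟨by simp, List.isChain_singleton v, rfl, rfl⟩

lemma walkFrom_append_s11 {s u v : V} {l : List V} (h : WalkFrom E s u l)
    (huv : E u v) : WalkFrom E s v (l ++ [v]) := by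
  obtain ⟨hne, hch, hh, hl⟩ := h
  refine ⟨by simp, ?_, ?_, by simp⟩
  · refine hch.append (by simp) ?_
    intro x hx y hy
    simp only [List.head?_cons, Option.mem_some_iff] at hy
    rw [hl, Option.mem_some_iff] at hx
    subst hx; subst hy; exact huv
  · cases l with
    | nil => exact absurd rfl hne
    | cons a l' => simpa using hh

lemma distX_le_walk {X : Set V} {s v : V} {l : List V} (hs : s ∈ X)
    (hw : WalkFrom E s v l) : distX E w X v ≤ wgtE w l :=
  (iInf₂_le s hs).trans ((iInf_le _ l).trans (iInf_le _ hw))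

lemma distX_triangle {X : Set V} {u v : V} (huv : E u v) :
    distX E w X v ≤ distX E w X u + w u v := by
  conv_rhs => rw [distX]
  simp only [ENNReal.iInf_add]
  refine le_iInf fun s => le_iInf fun hs => le_iInf fun l => le_iInf fun hwalk => ?_
  rw [← wgtE_append_last w l u v hwalk.2.2.2]
  exact distX_le_walk E w hs (walkFrom_append_s11 E hwalk huv)

end Aux

section Grow
variable {V : Type*} (E : V → V → Prop) (w : V → V → ℝ≥0∞) (Δ : ℝ≥0∞)
  (X : Set V)

lemma growStep_le (d : V → ℝ≥0∞) (v : V) : growStep E w Δ d v ≤ d v :=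
  inf_le_left

lemma growStep_le_relax {d : V → ℝ≥0∞} {u v : V}
    (h : E u v ∧ w u v ≤ Δ ∧ d u < Δ ∧ d u + w u v ≤ Δ) :
    growStep E w Δ d v ≤ d u + w u v :=
  inf_le_right.trans ((iInf_le _ u).trans (iInf_le _ h))

lemma iter_antitone (v : V) : ∀ {s t : ℕ}, s ≤ t →
    (growStep E w Δ)^[t] (dInit X) v ≤ (growStep E w Δ)^[s] (dInit X) v := by
  intro s t h
  induction t with
  | zero => simp_all
  | succ n ih =>
      rcases Nat.lt_or_ge s (n+1) with h' | h'
      · rw [Function.iterate_succ_apply']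
        exact (growStep_le E w Δ _ v).trans (ih (Nat.lt_succ_iff.mp h'))
      · have : s = n + 1 := le_antisymm h h'
        subst this; exact le_rfl

lemma iter_source {s : V} (hs : s ∈ X) (t : ℕ) :
    (growStep E w Δ)^[t] (dInit X) s ≤ 0 := by
  refine (iter_antitone E w Δ X s (Nat.zero_le t)).trans ?_
  simp [dInit, hs]

lemma key_relax (hpos : ∀ u v, E u v → 0 < w u v) (hΔtop : Δ ≠ ⊤) : ∀ (l : List V) (u v : V), WalkFrom (lightE E w Δ) u v l →
    ∀ (a : ℝ≥0∞) (m : ℕ),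
    (∀ t, m ≤ t → (growStep E w Δ)^[t] (dInit X) u ≤ a) →
    a + wgtE w l ≤ Δ →
    ∀ t, m + (l.length - 1) ≤ t →
      (growStep E w Δ)^[t] (dInit X) v ≤ a + wgtE w l
  | [], u, v, hwalk, _, _, _, _, _, _ => absurd rfl hwalk.1
  | [x], u, v, hwalk, a, m, hu, _, t, ht => by
      obtain ⟨-, -, h1, h2⟩ := hwalk
      simp only [List.head?_cons, List.getLast?_singleton, Option.some_inj] at h1 h2
      subst h1; subst h2
      rw [wgtE_singleton, add_zero]
      refine hu t ?_
      simpa using ht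
  | x :: b :: l, u, v, hwalk, a, m, hu, hle, t, ht => by
      obtain ⟨-, hch, h1, h2⟩ := hwalk
      have hx : x = u := by simpa using h1
      subst hx
      rw [List.Chain', List.isChain_cons_cons] at hch
      obtain ⟨hlight, hch'⟩ := hch
      rw [List.getLast?_cons_cons] at h2
      have hwalk' : WalkFrom (lightE E w Δ) b v (b :: l) :=
        ⟨by simp, hch', rfl, h2⟩
      have hwpos : 0 < w x b := hpos x b hlight.1
      have hsum : a + w x b + wgtE w (b :: l) ≤ Δ := by
        rwa [wgtE_cons_cons, ← add_assoc] at hle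
      have hawb : a + w x b ≤ Δ := le_trans (le_add_right le_rfl) hsum
      have haT : a ≠ ⊤ := fun h => hΔtop (top_le_iff.mp
        (by rw [h, top_add] at hawb; exact hawb))
      have haΔ : a < Δ := lt_of_lt_of_le (ENNReal.lt_add_right haT hwpos.ne') hawb
      have hb : ∀ t', m + 1 ≤ t' →
          (growStep E w Δ)^[t'] (dInit X) b ≤ a + w x b := by
        intro t' ht'
        obtain ⟨t'', rfl⟩ : ∃ t'', t' = t'' + 1 :=
          ⟨t' - 1, by omega⟩
        have hm : m ≤ t'' := by omega
        rw [Function.iterate_succ_apply']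
        refine (growStep_le_relax E w Δ
          ⟨hlight.1, hlight.2, lt_of_le_of_lt (hu t'' hm) haΔ,
            le_trans (add_le_add_left (hu t'' hm) _) hawb⟩).trans ?_
        exact add_le_add_left (hu t'' hm) _
      have ih := key_relax hpos hΔtop (b :: l) b v hwalk' (a + w x b) (m + 1) hb hsum t
        (by simp only [List.length_cons] at ht ⊢; omega)
      rw [wgtE_cons_cons, ← add_assoc]
      exact ih

end Grow

theorem stmt11 {V : Type*} [Fintype V]
    (E : V → V → Prop) (w : V → V → ℝ≥0∞)
    (hsym : ∀ u v, E u v → E v u) (hwsym : ∀ u v, w u v = w v u)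
    (hpos : ∀ u v, E u v → 0 < w u v)
    (X : Set V) (hX : X.Nonempty)
    (Δ : ℝ≥0∞) (hΔ : 0 < Δ) (hΔtop : Δ ≠ ⊤) :
    (∀ (t : ℕ) (v : V),
      distX (lightE E w Δ) w X v ≤ (growStep E w Δ)^[t] (dInit X) v) ∧
    (∀ ℓ : ℕ,
      (∀ v : V, distX (lightE E w Δ) w X v ≤ Δ →
        ∃ s ∈ X, ∃ l, WalkFrom (lightE E w Δ) s v l ∧
          wgtE w l = distX (lightE E w Δ) w X v ∧ l.length - 1 ≤ ℓ) →
      ∀ v : V, distX (lightE E w Δ) w X v ≤ Δ →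
        (growStep E w Δ)^[ℓ] (dInit X) v = distX (lightE E w Δ) w X v) := by
  have hlow : ∀ (t : ℕ) (v : V),
      distX (lightE E w Δ) w X v ≤ (growStep E w Δ)^[t] (dInit X) v := by
    intro t
    induction t with
    | zero =>
        intro v
        simp only [Function.iterate_zero, id_eq, dInit]
        refine le_iInf fun hv => ?_
        calc distX (lightE E w Δ) w X v ≤ wgtE w [v] :=
              distX_le_walk _ w hv (walkFrom_singleton _ v)
          _ = 0 := wgtE_singleton w v
    | succ n ih =>
        intro v
        rw [Function.iterate_succ_apply']
        refine le_inf (ih v) (le_iInf fun u => le_iInf fun hc => ?_)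
        calc distX (lightE E w Δ) w X v
            ≤ distX (lightE E w Δ) w X u + w u v :=
              distX_triangle _ w ⟨hc.1, hc.2.1⟩
          _ ≤ (growStep E w Δ)^[n] (dInit X) u + w u v :=
              add_le_add_left (ih u) _
  refine ⟨hlow, fun ℓ hwalks v hv => ?_⟩
  obtain ⟨s, hs, l, hwalk, hwgt, hlen⟩ := hwalks v hv
  refine le_antisymm ?_ (hlow ℓ v)
  have := key_relax E w Δ X hpos hΔtop l s v hwalk 0 0
    (fun t _ => iter_source E w Δ X hs t) (by rw [zero_add, hwgt]; exact hv)
    ℓ (by omega)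
  rw [zero_add, hwgt] at this
  exact this
end
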